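/- Let X_1, ..., X_n be independent Bernoulli random variables with parameters p_i = E[X_i] and λ = Σ_{i=1}^n p_i, and let α_1, ..., α_n be i.i.d. random variables independent of the X_i with Pr(α_i = 1) = Pr(α_i = 2) = 1/2. Let S_n = Σ_{i=1}^n α_i X_i, and let CP(λ/2, λ/2) denote the distribution of Z_1 + 2 Z_2 where Z_1, Z_2 are independent Poisson(λ/2) random variables. Then D(P_{S_n} ‖ CP(λ/2, λ/2)) ≤ Σ_{i=1}^n p_i². -/

import Mathlib

open MeasureTheory ProbabilityTheory Real Filter

/-- The distribution (probability mass function) of a random variable `X`,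
as a real-valued function: `distOf μ X a = μ(X = a)`. -/
noncomputable def distOf {Ω α : Type*} [MeasurableSpace Ω] (μ : Measure Ω) (X : Ω → α) (a : α) : ℝ :=
  (μ {ω | X ω = a}).toReal

/-- Relative entropy `D(P‖Q) = ∑ₓ P(x) log (P(x)/Q(x))` (natural logarithm). -/
noncomputable def relEnt {α : Type*} (P Q : α → ℝ) : ℝ :=
  ∑' x, P x * Real.log (P x / Q x)

/-- Shannon entropy `H(P) = -∑ₓ P(x) log P(x)` (natural logarithm). -/
noncomputable def entH {α : Type*} (P : α → ℝ) : ℝ :=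
  -∑' x, P x * Real.log (P x)

/-- The Poisson(l) probability mass function on ℕ. -/
noncomputable def poissonPMF (l : ℝ) (k : ℕ) : ℝ :=
  Real.exp (-l) * l ^ k / (Nat.factorial k)


open Finset

/-- The scaled score function `ρ_X(x) = (x+1)P(x+1)/(λ P(x)) - 1`. -/
noncomputable def scaledScore (P : ℕ → ℝ) (l : ℝ) (x : ℕ) : ℝ :=
  ((x + 1 : ℕ) : ℝ) * P (x + 1) / (l * P x) - 1

/-- The scaled Fisher information `K(X) = λ E[ρ_X(X)²]`. -/
noncomputable def scaledFisher (P : ℕ → ℝ) (l : ℝ) : ℝ :=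
  l * ∑' x, P x * (scaledScore P l x) ^ 2

/-- Total variation distance `‖P - Q‖_TV = ∑ₓ |P(x) - Q(x)|`. -/
noncomputable def tvDist {α : Type*} (P Q : α → ℝ) : ℝ :=
  ∑' x, |P x - Q x|

/-- The compound Poisson distribution `CP(l/2, l/2)`: the law of `Z₁ + 2 Z₂`
where `Z₁, Z₂` are i.i.d. Poisson(l/2). -/
noncomputable def cpPMF (l : ℝ) (k : ℕ) : ℝ :=
  ∑' j : ℕ, if 2 * j ≤ k then poissonPMF (l / 2) (k - 2 * j) * poissonPMF (l / 2) j else 0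

noncomputable def conv (f g : ℕ → ℝ) (k : ℕ) : ℝ :=
  ∑ j ∈ Finset.range (k + 1), f j * g (k - j)

lemma conv_eq_coeff (f g : ℕ → ℝ) (k : ℕ) :
    conv f g k = PowerSeries.coeff k (PowerSeries.mk f * PowerSeries.mk g) := by
  rw [PowerSeries.coeff_mul, Finset.Nat.sum_antidiagonal_eq_sum_range_succ
    (fun i j => PowerSeries.coeff i (PowerSeries.mk f) * PowerSeries.coeff j (PowerSeries.mk g))]
  simp [conv]

lemma mk_conv (f g : ℕ → ℝ) :
    PowerSeries.mk (conv f g) = PowerSeries.mk f * PowerSeries.mk g := by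
  ext k
  rw [PowerSeries.coeff_mk, conv_eq_coeff]

lemma poisson_conv (a b : ℝ) :
    PowerSeries.mk (_root_.poissonPMF a) * PowerSeries.mk (_root_.poissonPMF b)
      = PowerSeries.mk (_root_.poissonPMF (a + b)) := by
  rw [← mk_conv]
  ext k
  rw [PowerSeries.coeff_mk, PowerSeries.coeff_mk]
  unfold conv _root_.poissonPMF
  have hbin : (a + b) ^ k = ∑ j ∈ range (k + 1), a ^ j * b ^ (k - j) * (k.choose j) :=
    add_pow a b k
  rw [hbin, Finset.mul_sum, Finset.sum_div]
  refine Finset.sum_congr rfl fun j hj => ?_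
  have hjk : j ≤ k := Nat.lt_succ_iff.mp (Finset.mem_range.mp hj)
  have hfact : (k.choose j : ℝ) * (Nat.factorial j) * (Nat.factorial (k - j)) = Nat.factorial k := by
    exact_mod_cast congrArg Nat.cast (Nat.choose_mul_factorial_mul_factorial hjk)
  have h1 : Real.exp (-a) * Real.exp (-b) = Real.exp (-(a+b)) := by
    rw [← Real.exp_add]; ring_nf
  have hj0 : (Nat.factorial j : ℝ) ≠ 0 := Nat.cast_ne_zero.mpr (Nat.factorial_ne_zero j)
  have hk0 : (Nat.factorial (k - j) : ℝ) ≠ 0 := Nat.cast_ne_zero.mpr (Nat.factorial_ne_zero _)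
  have hkk : (Nat.factorial k : ℝ) ≠ 0 := Nat.cast_ne_zero.mpr (Nat.factorial_ne_zero _)
  have h2 : Real.exp (-b + -a) = Real.exp (-a) * Real.exp (-b) := by
    rw [← Real.exp_add]; ring_nf
  field_simp
  rw [← h1, ← hfact]
  ring

/-- spread a pmf onto even integers -/
noncomputable def dbl (f : ℕ → ℝ) (k : ℕ) : ℝ := if 2 ∣ k then f (k / 2) else 0

lemma image_two_mul (m : ℕ) :
    (range (m + 1)).image (fun i => 2 * i) = (range (2 * m + 1)).filter (fun i => 2 ∣ i) := by
  ext x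
  simp only [Finset.mem_image, Finset.mem_filter, Finset.mem_range]
  constructor
  · rintro ⟨i, hi, rfl⟩
    exact ⟨by omega, ⟨i, by ring⟩⟩
  · rintro ⟨hx, i, rfl⟩
    exact ⟨i, by omega, by ring⟩

lemma dbl_mul (f g : ℕ → ℝ) :
    PowerSeries.mk (dbl f) * PowerSeries.mk (dbl g) = PowerSeries.mk (dbl (conv f g)) := by
  rw [← mk_conv]
  ext k
  rw [PowerSeries.coeff_mk, PowerSeries.coeff_mk]
  rcases Nat.even_or_odd k with ⟨m, hm⟩ | hodd
  · subst hm
    have hk : m + m = 2 * m := by ring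
    rw [hk]
    have h2 : dbl (conv f g) (2 * m) = conv f g m := by
      simp [dbl, Nat.mul_div_cancel_left m (by norm_num : 0 < 2)]
    rw [h2]
    unfold conv
    rw [← Finset.sum_filter_of_ne (p := fun i => 2 ∣ i)
      (f := fun j => dbl f j * dbl g (2 * m - j)), ← image_two_mul,
      Finset.sum_image (by intro x _ y _ h; have : 2 * x = 2 * y := h; omega)]
    · refine Finset.sum_congr rfl fun j hj => ?_
      have hjm : j ≤ m := Nat.lt_succ_iff.mp (Finset.mem_range.mp hj)
      have e1 : dbl f (2 * j) = f j := by
        simp [dbl, Nat.mul_div_cancel_left j (by norm_num : 0 < 2)]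
      have e2 : dbl g (2 * m - 2 * j) = g (m - j) := by
        have : 2 * m - 2 * j = 2 * (m - j) := by omega
        rw [this]
        simp [dbl, Nat.mul_div_cancel_left (m - j) (by norm_num : 0 < 2)]
      rw [e1, e2]
    · intro x _ hx
      by_contra h2x
      exact hx (by simp [dbl, h2x])
  · have hk2 : ¬ (2 ∣ k) := by
      rcases hodd with ⟨m, hm⟩; omega
    have hz : dbl (conv f g) k = 0 := by simp [dbl, hk2]
    rw [hz]
    unfold conv
    refine Finset.sum_eq_zero fun j hj => ?_
    have hjk : j ≤ k := Nat.lt_succ_iff.mp (Finset.mem_range.mp hj)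
    by_cases h2j : 2 ∣ j
    · have : ¬ (2 ∣ (k - j)) := by
        rcases h2j with ⟨i, rfl⟩
        intro ⟨i2, hi2⟩; omega
      simp [dbl, this]
    · simp [dbl, h2j]

/-- finite-sum form of the compound Poisson pmf -/
noncomputable def cpF (l : ℝ) (k : ℕ) : ℝ :=
  ∑ j ∈ range (k / 2 + 1), _root_.poissonPMF (l / 2) (k - 2 * j) * _root_.poissonPMF (l / 2) j

lemma filter_even_range (k : ℕ) :
    (range (k + 1)).filter (fun i => 2 ∣ i) = (range (2 * (k / 2) + 1)).filter (fun i => 2 ∣ i) := by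
  ext x
  simp only [Finset.mem_filter, Finset.mem_range]
  omega

lemma mk_cpF (l : ℝ) :
    PowerSeries.mk (cpF l)
      = PowerSeries.mk (dbl (_root_.poissonPMF (l / 2))) * PowerSeries.mk (_root_.poissonPMF (l / 2)) := by
  rw [← mk_conv]
  refine congrArg PowerSeries.mk ?_
  funext k
  unfold conv cpF
  rw [← Finset.sum_filter_of_ne (p := fun i => 2 ∣ i)
    (f := fun j => dbl (_root_.poissonPMF (l/2)) j * _root_.poissonPMF (l/2) (k - j)),
    filter_even_range, ← image_two_mul (k / 2), Finset.sum_image (by intro x _ y _ h; have : 2 * x = 2 * y := h; omega)]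
  · refine Finset.sum_congr rfl fun j hj => ?_
    have e1 : dbl (_root_.poissonPMF (l/2)) (2 * j) = _root_.poissonPMF (l/2) j := by
      simp [dbl, Nat.mul_div_cancel_left j (by norm_num : 0 < 2)]
    rw [e1, mul_comm]
  · intro x _ hx
    by_contra h2x
    exact hx (by simp [dbl, h2x])

lemma mk_cpF_mul (a b : ℝ) :
    PowerSeries.mk (cpF a) * PowerSeries.mk (cpF b) = PowerSeries.mk (cpF (a + b)) := by
  rw [mk_cpF, mk_cpF, mk_cpF]
  have h : (a + b) / 2 = a / 2 + b / 2 := by ring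
  have hpc : _root_.poissonPMF (a / 2 + b / 2) = conv (_root_.poissonPMF (a / 2)) (_root_.poissonPMF (b / 2)) := by
    funext k
    have h2 := congrArg (PowerSeries.coeff k) (poisson_conv (a/2) (b/2))
    rw [← mk_conv] at h2
    simpa using h2.symm
  rw [h, hpc, ← dbl_mul, mk_conv]
  ring

lemma log_ge_one_sub_inv {x : ℝ} (hx : 0 < x) : 1 - x⁻¹ ≤ Real.log x := by
  have h := Real.log_le_sub_one_of_pos (inv_pos.mpr hx)
  rw [Real.log_inv] at h
  linarith

lemma log_sum_ineq {ι : Type*} (s : Finset ι) (a b : ι → ℝ)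
    (ha : ∀ i ∈ s, 0 ≤ a i) (hb : ∀ i ∈ s, 0 ≤ b i)
    (hab : ∀ i ∈ s, b i = 0 → a i = 0) :
    (∑ i ∈ s, a i) * Real.log ((∑ i ∈ s, a i) / (∑ i ∈ s, b i))
      ≤ ∑ i ∈ s, a i * Real.log (a i / b i) := by
  set A := ∑ i ∈ s, a i with hA
  set B := ∑ i ∈ s, b i with hB
  rcases eq_or_lt_of_le (Finset.sum_nonneg ha : (0:ℝ) ≤ A) with hA0 | hA0
  · have hz : ∀ i ∈ s, a i = 0 := fun i hi =>
      (Finset.sum_eq_zero_iff_of_nonneg ha).mp hA0.symm i hi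
    have hAz : A = 0 := by rw [hA, ← hA0]
    rw [hAz, zero_mul]
    refine le_of_eq (Finset.sum_eq_zero fun i hi => ?_).symm
    rw [hz i hi, zero_mul]
  · have hB0 : 0 < B := by
      rcases eq_or_lt_of_le (Finset.sum_nonneg hb : (0:ℝ) ≤ B) with h0 | h0
      · exfalso
        have hz : ∀ i ∈ s, b i = 0 := fun i hi =>
          (Finset.sum_eq_zero_iff_of_nonneg hb).mp h0.symm i hi
        have : A = 0 := Finset.sum_eq_zero fun i hi => hab i hi (hz i hi)
        exact absurd this (ne_of_gt hA0)
      · exact h0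
    have key : ∀ i ∈ s, a i * Real.log (a i / b i) - a i * Real.log (A / B)
        ≥ a i - (A / B) * b i := by
      intro i hi
      rcases eq_or_lt_of_le (ha i hi) with h0 | h0
      · rw [← h0, zero_mul, zero_mul, sub_zero]
        have : 0 ≤ (A / B) * b i := mul_nonneg (le_of_lt (div_pos hA0 hB0)) (hb i hi)
        linarith
      · have hbi : 0 < b i := by
          rcases eq_or_lt_of_le (hb i hi) with h0' | h0'
          · exact absurd (hab i hi h0'.symm) (ne_of_gt h0)
          · exact h0'
        have hx : 0 < (a i / b i) / (A / B) := by positivity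
        have hlog : Real.log ((a i / b i) / (A / B))
            = Real.log (a i / b i) - Real.log (A / B) :=
          Real.log_div (by positivity) (by positivity)
        have h1 := log_ge_one_sub_inv hx
        rw [hlog] at h1
        have h2 : a i * (1 - ((a i / b i) / (A / B))⁻¹)
            ≤ a i * (Real.log (a i / b i) - Real.log (A / B)) :=
          mul_le_mul_of_nonneg_left h1 (le_of_lt h0)
        have h3 : a i * (1 - ((a i / b i) / (A / B))⁻¹) = a i - (A / B) * b i := by
          field_simp
        rw [h3] at h2
        linarith [h2]
    have hsum : ∑ i ∈ s, (a i - (A / B) * b i) = 0 := by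
      rw [Finset.sum_sub_distrib, ← Finset.mul_sum, ← hA, ← hB]
      field_simp
      ring
    have := Finset.sum_le_sum key
    rw [Finset.sum_sub_distrib, Finset.sum_sub_distrib] at this
    have h4 : ∑ i ∈ s, (a i - (A / B) * b i) ≤
        ∑ i ∈ s, a i * Real.log (a i / b i) - ∑ i ∈ s, a i * Real.log (A / B) := by
      rw [Finset.sum_sub_distrib]
      exact this
    rw [hsum] at h4
    rw [← Finset.sum_mul, ← hA] at h4
    linarith

lemma sum_triangle (K : ℕ) (φ : ℕ → ℕ → ℝ) :
    ∑ k ∈ range K, ∑ j ∈ range (k + 1), φ j (k - j)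
      = ∑ j ∈ range K, ∑ m ∈ range (K - j), φ j m := by
  induction K with
  | zero => simp
  | succ K ih =>
    rw [Finset.sum_range_succ, ih, Finset.sum_range_succ
      (fun j => ∑ m ∈ range (K + 1 - j), φ j m)]
    have h1 : ∑ j ∈ range K, ∑ m ∈ range (K + 1 - j), φ j m
        = ∑ j ∈ range K, (∑ m ∈ range (K - j), φ j m + φ j (K - j)) := by
      refine Finset.sum_congr rfl fun j hj => ?_
      have hjK : j < K := Finset.mem_range.mp hj
      have : K + 1 - j = (K - j) + 1 := by omega
      rw [this, Finset.sum_range_succ]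
    rw [h1, Finset.sum_add_distrib]
    have h2 : ∑ j ∈ range (K + 1), φ j (K - j)
        = ∑ j ∈ range K, φ j (K - j) + φ K (K - K) := Finset.sum_range_succ _ K
    rw [h2]
    have : K - K = 0 := Nat.sub_self K
    rw [this]
    have h3 : ∑ m ∈ range (K + 1 - K), φ K m = φ K 0 := by
      have : K + 1 - K = 1 := by omega
      rw [this, Finset.sum_range_one]
    rw [h3]
    ring

lemma relEnt_eq_sum (P Q : ℕ → ℝ) (N : ℕ) (h : ∀ k, N ≤ k → P k = 0) :
    relEnt P Q = ∑ k ∈ range N, P k * Real.log (P k / Q k) := by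
  refine tsum_eq_sum fun k hk => ?_
  rw [h k (le_of_not_gt (by simpa using hk)), zero_mul]

/-- invariant carried through the convolution induction -/
structure Good (f : ℕ → ℝ) (N : ℕ) (F : ℕ → ℝ) : Prop where
  nonneg : ∀ k, 0 ≤ f k
  supp : ∀ k, N ≤ k → f k = 0
  sum_one : ∑ k ∈ range N, f k = 1
  ac : ∀ k, F k = 0 → f k = 0

lemma Good.sum_one' {f : ℕ → ℝ} {N : ℕ} {F : ℕ → ℝ} (hf : Good f N F) {M : ℕ} (hNM : N ≤ M) :
    ∑ k ∈ range M, f k = 1 := by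
  rw [← hf.sum_one]
  symm
  apply Finset.sum_subset (Finset.range_subset_range.mpr hNM)
  intro x _ hx
  exact hf.supp x (le_of_not_gt (fun h => hx (Finset.mem_range.mpr h)))

lemma conv_nonneg_ {f g : ℕ → ℝ} (hf : ∀ k, 0 ≤ f k) (hg : ∀ k, 0 ≤ g k) (k : ℕ) :
    0 ≤ conv f g k :=
  Finset.sum_nonneg fun j _ => mul_nonneg (hf j) (hg (k - j))

lemma Good.conv_good {f g F G : ℕ → ℝ} {N M : ℕ}
    (hf : Good f N F) (hg : Good g M G)
    (hF : ∀ k, 0 ≤ F k) (hG : ∀ k, 0 ≤ G k) :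
    Good (conv f g) (N + M) (conv F G) where
  nonneg := conv_nonneg_ hf.nonneg hg.nonneg
  supp := by
    intro k hk
    refine Finset.sum_eq_zero fun j hj => ?_
    by_cases hjN : N ≤ j
    · rw [hf.supp j hjN, zero_mul]
    · rw [hg.supp (k - j) (by omega), mul_zero]
  sum_one := by
    unfold conv
    rw [sum_triangle (N + M) (fun j m => f j * g m)]
    have : ∑ j ∈ range (N + M), ∑ m ∈ range (N + M - j), f j * g m
        = ∑ j ∈ range (N + M), f j * ∑ m ∈ range (N + M - j), g m := by
      refine Finset.sum_congr rfl fun j hj => ?_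
      rw [Finset.mul_sum]
    rw [this]
    have h2 : ∑ j ∈ range (N + M), f j * ∑ m ∈ range (N + M - j), g m
        = ∑ j ∈ range (N + M), f j := by
      refine Finset.sum_congr rfl fun j hj => ?_
      by_cases hjN : j < N
      · rw [hg.sum_one' (by omega), mul_one]
      · rw [hf.supp j (by omega), zero_mul]
    rw [h2]
    exact hf.sum_one' (by omega)
  ac := by
    intro k hk
    unfold conv at hk ⊢
    have hterm : ∀ j ∈ range (k + 1), F j * G (k - j) = 0 := by
      rw [Finset.sum_eq_zero_iff_of_nonneg
        (fun j _ => mul_nonneg (hF j) (hG (k - j)))] at hk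
      exact hk
    refine Finset.sum_eq_zero fun j hj => ?_
    rcases mul_eq_zero.mp (hterm j hj) with h | h
    · rw [hf.ac j h, zero_mul]
    · rw [hg.ac (k - j) h, mul_zero]

lemma relEnt_conv_le {f g F G : ℕ → ℝ} {N M : ℕ}
    (hf : Good f N F) (hg : Good g M G)
    (hF : ∀ k, 0 ≤ F k) (hG : ∀ k, 0 ≤ G k) :
    relEnt (conv f g) (conv F G) ≤ relEnt f F + relEnt g G := by
  rw [relEnt_eq_sum _ _ (N + M) (hf.conv_good hg hF hG).supp,
    relEnt_eq_sum f F N hf.supp, relEnt_eq_sum g G M hg.supp]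
  set Lf : ℕ → ℝ := fun j => Real.log (f j / F j) with hLf
  set Lg : ℕ → ℝ := fun m => Real.log (g m / G m) with hLg
  -- Step 1: log-sum inequality for each k
  have step1 : ∀ k, conv f g k * Real.log (conv f g k / conv F G k)
      ≤ ∑ j ∈ range (k + 1), (f j * g (k - j)) * Real.log ((f j * g (k - j)) / (F j * G (k - j))) := by
    intro k
    exact log_sum_ineq (range (k + 1)) (fun j => f j * g (k - j)) (fun j => F j * G (k - j))
      (fun j _ => mul_nonneg (hf.nonneg j) (hg.nonneg (k - j)))
      (fun j _ => mul_nonneg (hF j) (hG (k - j)))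
      (fun j _ hz => by
        have hz' : F j * G (k - j) = 0 := hz
        show f j * g (k - j) = 0
        rcases mul_eq_zero.mp hz' with h | h
        · rw [hf.ac j h, zero_mul]
        · rw [hg.ac (k - j) h, mul_zero])
  -- Step 2: rewrite each term with split logs
  have step2 : ∀ j m, (f j * g m) * Real.log ((f j * g m) / (F j * G m))
      = f j * g m * (Lf j + Lg m) := by
    intro j m
    by_cases hz : f j * g m = 0
    · rw [hz, zero_mul, zero_mul]
    · have hfj : 0 < f j := lt_of_le_of_ne (hf.nonneg j) (by
        intro h; exact hz (by rw [← h, zero_mul]))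
      have hgm : 0 < g m := lt_of_le_of_ne (hg.nonneg m) (by
        intro h; exact hz (by rw [← h, mul_zero]))
      have hFj : 0 < F j := lt_of_le_of_ne (hF j) (fun h => by
        have := hf.ac j h.symm; exact absurd this (ne_of_gt hfj))
      have hGm : 0 < G m := lt_of_le_of_ne (hG m) (fun h => by
        have := hg.ac m h.symm; exact absurd this (ne_of_gt hgm))
      have hsplit : (f j * g m) / (F j * G m) = (f j / F j) * (g m / G m) := by
        field_simp
      rw [hsplit, Real.log_mul (by positivity) (by positivity)]
  -- combine
  calc ∑ k ∈ range (N + M), conv f g k * Real.log (conv f g k / conv F G k)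
      ≤ ∑ k ∈ range (N + M), ∑ j ∈ range (k + 1),
          (f j * g (k - j)) * Real.log ((f j * g (k - j)) / (F j * G (k - j))) :=
        Finset.sum_le_sum fun k _ => step1 k
    _ = ∑ k ∈ range (N + M), ∑ j ∈ range (k + 1),
          f j * g (k - j) * (Lf j + Lg (k - j)) := by
        refine Finset.sum_congr rfl fun k _ => Finset.sum_congr rfl fun j _ => step2 j (k - j)
    _ = ∑ j ∈ range (N + M), ∑ m ∈ range (N + M - j), f j * g m * (Lf j + Lg m) :=
        sum_triangle (N + M) (fun j m => f j * g m * (Lf j + Lg m))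
    _ = ∑ j ∈ range N, ∑ m ∈ range M, f j * g m * (Lf j + Lg m) := by
        rw [← Finset.sum_subset (Finset.range_subset_range.mpr (by omega : N ≤ N + M))
          (fun x _ hx => Finset.sum_eq_zero fun m _ => by
            rw [hf.supp x (le_of_not_gt (by simpa using hx)), zero_mul, zero_mul])]
        refine Finset.sum_congr rfl fun j hj => ?_
        have hjN : j < N := Finset.mem_range.mp hj
        rw [← Finset.sum_subset (Finset.range_subset_range.mpr (by omega : M ≤ N + M - j))
          (fun m _ hm => by
            rw [hg.supp m (le_of_not_gt (by simpa using hm)), mul_zero, zero_mul])]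
    _ = ∑ j ∈ range N, (f j * Lf j * (∑ m ∈ range M, g m)
          + f j * (∑ m ∈ range M, g m * Lg m)) := by
        refine Finset.sum_congr rfl fun j _ => ?_
        rw [Finset.mul_sum, Finset.mul_sum, ← Finset.sum_add_distrib]
        refine Finset.sum_congr rfl fun m _ => by ring
    _ = ∑ j ∈ range N, f j * Lf j + ∑ m ∈ range M, g m * Lg m := by
        rw [hg.sum_one, Finset.sum_add_distrib, ← Finset.sum_mul, ← Finset.sum_mul, hf.sum_one]
        ring
    _ = _ := rfl

section Measure
variable {Ω : Type*} [MeasurableSpace Ω] (μ : Measure Ω) [IsProbabilityMeasure μ]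

lemma distOf_add_indep (U V : Ω → ℕ) (hU : Measurable U) (hV : Measurable V)
    (h : IndepFun U V μ) :
    distOf μ (fun ω => U ω + V ω) = conv (distOf μ U) (distOf μ V) := by
  funext k
  have hset : {ω | U ω + V ω = k}
      = ⋃ j ∈ Finset.range (k + 1), (U ⁻¹' {j} ∩ V ⁻¹' {k - j}) := by
    ext ω
    simp only [Set.mem_setOf_eq, Set.mem_iUnion, Set.mem_inter_iff, Set.mem_preimage,
      Set.mem_singleton_iff, Finset.mem_range]
    constructor
    · intro hk
      exact ⟨U ω, by omega, rfl, by omega⟩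
    · rintro ⟨j, hj, h1, h2⟩
      omega
  have hmeas : ∀ j : ℕ, MeasurableSet (U ⁻¹' {j} ∩ V ⁻¹' {k - j}) := fun j =>
    (hU (measurableSet_singleton j)).inter (hV (measurableSet_singleton _))
  have hdisj : (Finset.range (k + 1) : Set ℕ).PairwiseDisjoint
      (fun j => U ⁻¹' {j} ∩ V ⁻¹' {k - j}) := by
    intro i _ j _ hij
    refine Set.disjoint_left.mpr fun ω hi hj => ?_
    exact hij (by rw [← hi.1, ← hj.1])
  have hμ : μ {ω | U ω + V ω = k}
      = ∑ j ∈ Finset.range (k + 1), μ (U ⁻¹' {j} ∩ V ⁻¹' {k - j}) := by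
    rw [hset, measure_biUnion_finset hdisj fun j _ => hmeas j]
  have hind : ∀ j : ℕ, μ (U ⁻¹' {j} ∩ V ⁻¹' {k - j}) = μ (U ⁻¹' {j}) * μ (V ⁻¹' {k - j}) :=
    fun j => h.measure_inter_preimage_eq_mul {j} {k - j}
      (measurableSet_singleton j) (measurableSet_singleton _)
  unfold distOf conv
  rw [show {ω | (fun ω => U ω + V ω) ω = k} = {ω | U ω + V ω = k} from rfl, hμ,
    ENNReal.toReal_sum (fun j _ => measure_ne_top μ _)]
  refine Finset.sum_congr rfl fun j _ => ?_
  rw [hind j, ENNReal.toReal_mul]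
  rfl
end Measure

section Indep
variable {Ω : Type*} [MeasurableSpace Ω] {μ : Measure Ω} [IsProbabilityMeasure μ]
variable {n : ℕ} {X A : Fin n → Ω → ℕ}

lemma W_indep_sum (hXmeas : ∀ i, Measurable (X i)) (hAmeas : ∀ i, Measurable (A i))
    (hindep : iIndepFun (Sum.elim X A) μ)
    (a : Fin n) (s : Finset (Fin n)) (ha : a ∉ s) :
    IndepFun (fun ω => A a ω * X a ω) (fun ω => ∑ i ∈ s, A i ω * X i ω) μ := by
  classical
  set f : Fin n ⊕ Fin n → Ω → ℕ := Sum.elim X A with hf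
  have hfmeas : ∀ i, Measurable (f i) := by
    rintro (i | i)
    · exact hXmeas i
    · exact hAmeas i
  set S : Finset (Fin n ⊕ Fin n) := {Sum.inl a, Sum.inr a} with hS
  set T : Finset (Fin n ⊕ Fin n) := s.image Sum.inl ∪ s.image Sum.inr with hT
  have hST : Disjoint S T := by
    rw [Finset.disjoint_left]
    intro x hx hxT
    simp only [hS, Finset.mem_insert, Finset.mem_singleton] at hx
    simp only [hT, Finset.mem_union, Finset.mem_image] at hxT
    rcases hx with rfl | rfl
    · rcases hxT with ⟨y, hy, hxy⟩ | ⟨y, hy, hxy⟩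
      · injection hxy with h'; exact ha (h' ▸ hy)
      · cases hxy
    · rcases hxT with ⟨y, hy, hxy⟩ | ⟨y, hy, hxy⟩
      · cases hxy
      · injection hxy with h'; exact ha (h' ▸ hy)
  have hbase := hindep.indepFun_finset S T hST hfmeas
  have hinlA : (Sum.inr a : Fin n ⊕ Fin n) ∈ S := by simp [hS]
  have hinlX : (Sum.inl a : Fin n ⊕ Fin n) ∈ S := by simp [hS]
  set φ : ((i : S) → ℕ) → ℕ := fun v => v ⟨Sum.inr a, hinlA⟩ * v ⟨Sum.inl a, hinlX⟩ with hφ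
  have hφm : Measurable φ := (measurable_pi_apply _).mul (measurable_pi_apply _)
  have hTmem1 : ∀ j ∈ s, (Sum.inr j : Fin n ⊕ Fin n) ∈ T := fun j hj =>
    Finset.mem_union_right _ (Finset.mem_image_of_mem _ hj)
  have hTmem2 : ∀ j ∈ s, (Sum.inl j : Fin n ⊕ Fin n) ∈ T := fun j hj =>
    Finset.mem_union_left _ (Finset.mem_image_of_mem _ hj)
  set ψ : ((i : T) → ℕ) → ℕ := fun v =>
    ∑ j ∈ s.attach, v ⟨Sum.inr j.1, hTmem1 j.1 j.2⟩ * v ⟨Sum.inl j.1, hTmem2 j.1 j.2⟩ with hψ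
  have hψm : Measurable ψ :=
    Finset.measurable_sum s.attach fun j _ =>
      (measurable_pi_apply _).mul (measurable_pi_apply _)
  have hcomp := hbase.comp hφm hψm
  have h1 : (φ ∘ fun ω (i : S) => f i ω) = fun ω => A a ω * X a ω := rfl
  have h2 : (ψ ∘ fun ω (i : T) => f i ω) = fun ω => ∑ i ∈ s, A i ω * X i ω := by
    funext ω
    show ∑ j ∈ s.attach, A j.1 ω * X j.1 ω = ∑ i ∈ s, A i ω * X i ω
    exact Finset.sum_attach s (fun i => A i ω * X i ω)
  rwa [h1, h2] at hcomp
end Indep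

noncomputable def qB (p : ℝ) : ℕ → ℝ
  | 0 => 1 - p
  | 1 => p / 2
  | 2 => p / 2
  | _ => 0

section QB
variable {Ω : Type*} [MeasurableSpace Ω] {μ : Measure Ω} [IsProbabilityMeasure μ]
variable {n : ℕ} {X A : Fin n → Ω → ℕ}

lemma q_eq (hXmeas : ∀ i, Measurable (X i)) (hAmeas : ∀ i, Measurable (A i))
    (hbin : ∀ i ω, X i ω ≤ 1)
    (hindep : iIndepFun (Sum.elim X A) μ)
    (hA : ∀ i k, distOf μ (A i) k = if k = 1 then (1 : ℝ) / 2 else if k = 2 then 1 / 2 else 0)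
    (p : Fin n → ℝ) (hp : ∀ i, ∫ ω, (X i ω : ℝ) ∂μ = p i) (i : Fin n) :
    distOf μ (fun ω => A i ω * X i ω) = qB (p i) ∧ 0 ≤ p i ∧ p i ≤ 1 := by
  have hXA : IndepFun (X i) (A i) μ := by
    have := hindep.indepFun (i := Sum.inl i) (j := Sum.inr i) (by simp)
    exact this
  have hAX : IndepFun (A i) (X i) μ := hXA.symm
  -- p i = μ {X i = 1}
  have hpX1 : (μ {ω | X i ω = 1}).toReal = p i := by
    rw [← hp i]
    have hms : MeasurableSet {ω | X i ω = 1} := hXmeas i (measurableSet_singleton 1)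
    have : ∀ ω, (X i ω : ℝ) = Set.indicator {ω | X i ω = 1} (fun _ => (1:ℝ)) ω := by
      intro ω
      by_cases h : X i ω = 1
      · simp [Set.indicator_apply, Set.mem_setOf_eq, h]
      · have h0 : X i ω = 0 := by have := hbin i ω; omega
        simp [Set.indicator_apply, Set.mem_setOf_eq, h, h0]
    rw [MeasureTheory.integral_congr_ae (Filter.Eventually.of_forall this),
      MeasureTheory.integral_indicator_const (1:ℝ) hms]
    simp [measureReal_def]
  have hp0 : 0 ≤ p i := hpX1 ▸ ENNReal.toReal_nonneg
  have hp1 : p i ≤ 1 := by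
    rw [← hpX1]
    exact (ENNReal.toReal_le_toReal (measure_ne_top μ _) (measure_ne_top μ _)).mpr
      (μ.mono (Set.subset_univ _)) |>.trans_eq (by simp)
  -- measures of A-level sets
  have hAmeasure : ∀ k : ℕ, k ≠ 1 → k ≠ 2 → μ {ω | A i ω = k} = 0 := by
    intro k h1 h2
    have := hA i k
    rw [if_neg h1, if_neg h2] at this
    have h := (ENNReal.toReal_eq_zero_iff _).mp this
    rcases h with h | h
    · exact h
    · exact absurd h (measure_ne_top μ _)
  have hA1 : (μ {ω | A i ω = 1}).toReal = 1 / 2 := by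
    have := hA i 1; simp only [distOf] at this; rw [this]; norm_num
  have hA2 : (μ {ω | A i ω = 2}).toReal = 1 / 2 := by
    have := hA i 2; simp only [distOf] at this; rw [this]; norm_num
  refine ⟨funext fun k => ?_, hp0, hp1⟩
  have hprod : ∀ a : ℕ, μ ({ω | A i ω = a} ∩ {ω | X i ω = 1})
      = μ {ω | A i ω = a} * μ {ω | X i ω = 1} := fun a =>
    hAX.measure_inter_preimage_eq_mul {a} {1} (measurableSet_singleton a)
      (measurableSet_singleton 1)
  match k with
  | 0 =>
    have hset : {ω | A i ω * X i ω = 0}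
        = {ω | X i ω = 0} ∪ ({ω | A i ω = 0} ∩ {ω | X i ω = 1}) := by
      ext ω
      simp only [Set.mem_setOf_eq, Set.mem_union, Set.mem_inter_iff]
      have := hbin i ω
      constructor
      · intro h
        rcases Nat.mul_eq_zero.mp h with h | h
        · by_cases hX : X i ω = 0
          · exact Or.inl hX
          · exact Or.inr ⟨h, by omega⟩
        · exact Or.inl h
      · rintro (h | ⟨h1, h2⟩)
        · rw [h, mul_zero]
        · rw [h1, zero_mul]
    have hdisj : Disjoint {ω | X i ω = 0} ({ω | A i ω = 0} ∩ {ω | X i ω = 1}) := by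
      refine Set.disjoint_left.mpr fun ω h0 h1 => ?_
      have := h1.2
      simp only [Set.mem_setOf_eq] at h0 this
      omega
    have hzero : μ ({ω | A i ω = 0} ∩ {ω | X i ω = 1}) = 0 := by
      rw [hprod 0, hAmeasure 0 (by omega) (by omega), zero_mul]
    show (μ {ω | A i ω * X i ω = 0}).toReal = 1 - p i
    rw [hset, measure_union hdisj
      ((hAmeas i (measurableSet_singleton 0)).inter (hXmeas i (measurableSet_singleton 1))),
      hzero, add_zero]
    -- μ {X = 0} = 1 - μ {X = 1}
    have hcompl : {ω | X i ω = 0} = {ω | X i ω = 1}ᶜ := by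
      ext ω
      simp only [Set.mem_setOf_eq, Set.mem_compl_iff]
      have := hbin i ω
      omega
    have hms : MeasurableSet {ω | X i ω = 1} := hXmeas i (measurableSet_singleton 1)
    rw [hcompl, prob_compl_eq_one_sub hms,
      ENNReal.toReal_sub_of_le prob_le_one ENNReal.one_ne_top, ENNReal.toReal_one, hpX1]
  | 1 =>
    have hset : {ω | A i ω * X i ω = 1} = {ω | A i ω = 1} ∩ {ω | X i ω = 1} := by
      ext ω
      simp only [Set.mem_setOf_eq, Set.mem_inter_iff]
      have := hbin i ω
      constructor
      · intro h
        have hX : X i ω = 1 := by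
          rcases Nat.le_one_iff_eq_zero_or_eq_one.mp (hbin i ω) with h0 | h1
          · rw [h0, mul_zero] at h; omega
          · exact h1
        rw [hX, mul_one] at h
        exact ⟨h, hX⟩
      · rintro ⟨h1, h2⟩; rw [h1, h2]
    show (μ {ω | A i ω * X i ω = 1}).toReal = p i / 2
    rw [hset, hprod 1, ENNReal.toReal_mul, hA1, hpX1]
    ring
  | 2 =>
    have hset : {ω | A i ω * X i ω = 2} = {ω | A i ω = 2} ∩ {ω | X i ω = 1} := by
      ext ω
      simp only [Set.mem_setOf_eq, Set.mem_inter_iff]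
      have := hbin i ω
      constructor
      · intro h
        have hX : X i ω = 1 := by
          rcases Nat.le_one_iff_eq_zero_or_eq_one.mp (hbin i ω) with h0 | h1
          · rw [h0, mul_zero] at h; omega
          · exact h1
        rw [hX, mul_one] at h
        exact ⟨h, hX⟩
      · rintro ⟨h1, h2⟩; rw [h1, h2]
    show (μ {ω | A i ω * X i ω = 2}).toReal = p i / 2
    rw [hset, hprod 2, ENNReal.toReal_mul, hA2, hpX1]
    ring
  | (m + 3) =>
    have hset : {ω | A i ω * X i ω = m + 3} = {ω | A i ω = m + 3} ∩ {ω | X i ω = 1} := by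
      ext ω
      simp only [Set.mem_setOf_eq, Set.mem_inter_iff]
      have := hbin i ω
      constructor
      · intro h
        have hX : X i ω = 1 := by
          rcases Nat.le_one_iff_eq_zero_or_eq_one.mp (hbin i ω) with h0 | h1
          · rw [h0, mul_zero] at h; omega
          · exact h1
        rw [hX, mul_one] at h
        exact ⟨h, hX⟩
      · rintro ⟨h1, h2⟩; rw [h1, h2, mul_one]
    show (μ {ω | A i ω * X i ω = m + 3}).toReal = qB (p i) (m + 3)
    rw [hset, hprod (m + 3), hAmeasure (m + 3) (by omega) (by omega), zero_mul]
    simp [qB]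
end QB


-- ### values of _root_.poissonPMF and cpF at small arguments
lemma po_zero (l : ℝ) : _root_.poissonPMF l 0 = Real.exp (-l) := by simp [_root_.poissonPMF]

lemma po_one (l : ℝ) : _root_.poissonPMF l 1 = Real.exp (-l) * l := by simp [_root_.poissonPMF]

lemma po_two (l : ℝ) : _root_.poissonPMF l 2 = Real.exp (-l) * l ^ 2 / 2 := by
  simp [_root_.poissonPMF, Nat.factorial]

lemma po_nonneg {l : ℝ} (hl : 0 ≤ l) (k : ℕ) : 0 ≤ _root_.poissonPMF l k := by
  unfold _root_.poissonPMF
  positivity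

lemma cpF_nonneg {l : ℝ} (hl : 0 ≤ l) (k : ℕ) : 0 ≤ cpF l k := by
  have hl2 : (0:ℝ) ≤ l / 2 := by linarith
  exact Finset.sum_nonneg fun j _ => mul_nonneg (po_nonneg hl2 _) (po_nonneg hl2 _)

lemma cpF_zero (l : ℝ) : cpF l 0 = Real.exp (-l) := by
  unfold cpF
  rw [show (0:ℕ)/2 + 1 = 1 from rfl, Finset.sum_range_one]
  simp only [Nat.mul_zero, Nat.sub_zero, po_zero]
  rw [← Real.exp_add]
  ring_nf

lemma cpF_one (l : ℝ) : cpF l 1 = Real.exp (-l) * (l / 2) := by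
  unfold cpF
  rw [show (1:ℕ)/2 + 1 = 1 from rfl, Finset.sum_range_one]
  simp only [Nat.mul_zero, Nat.sub_zero, po_zero, po_one]
  have hexp : Real.exp (-(l/2)) * Real.exp (-(l/2)) = Real.exp (-l) := by
    rw [← Real.exp_add]; ring_nf
  rw [← hexp]; ring

lemma cpF_two (l : ℝ) : cpF l 2 = Real.exp (-l) * ((l / 2) * (1 + l / 4)) := by
  unfold cpF
  rw [show (2:ℕ)/2 + 1 = 2 from rfl, Finset.sum_range_succ, Finset.sum_range_one]
  norm_num [po_zero, po_one, po_two]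
  have hexp : Real.exp (-(l/2)) * Real.exp (-(l/2)) = Real.exp (-l) := by
    rw [← Real.exp_add]; ring_nf
  rw [← hexp]; ring

lemma cpF_conv (a b : ℝ) : conv (cpF a) (cpF b) = cpF (a + b) := by
  funext k
  rw [conv_eq_coeff, mk_cpF_mul, PowerSeries.coeff_mk]

lemma cpPMF_eq_cpF (l : ℝ) : cpPMF l = cpF l := by
  funext k
  unfold cpPMF cpF
  rw [tsum_eq_sum (s := Finset.range (k / 2 + 1))]
  · refine Finset.sum_congr rfl fun j hj => ?_
    have hj' : j < k / 2 + 1 := Finset.mem_range.mp hj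
    rw [if_pos (by omega)]
  · intro j hj
    have hj' : ¬ j < k / 2 + 1 := by simpa using hj
    rw [if_neg (by omega)]

-- ### the component distribution qB and its entropy bound
lemma Good_qB {p : ℝ} (hp0 : 0 ≤ p) (hp1 : p ≤ 1) : Good (qB p) 3 (cpF p) where
  nonneg := by
    intro k
    match k with
    | 0 => show (0:ℝ) ≤ 1 - p; linarith
    | 1 => show (0:ℝ) ≤ p / 2; linarith
    | 2 => show (0:ℝ) ≤ p / 2; linarith
    | (m+3) => exact le_refl 0
  supp := by
    intro k hk
    match k, hk with
    | (m+3), _ => rfl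
  sum_one := by
    rw [Finset.sum_range_succ, Finset.sum_range_succ, Finset.sum_range_one]
    show (1 - p) + p / 2 + p / 2 = 1
    ring
  ac := by
    intro k hk
    match k with
    | 0 =>
      exfalso
      rw [cpF_zero] at hk
      exact Real.exp_ne_zero _ hk
    | 1 =>
      rw [cpF_one] at hk
      rcases mul_eq_zero.mp hk with h | h
      · exact absurd h (Real.exp_ne_zero _)
      · show p / 2 = 0; linarith
    | 2 =>
      rw [cpF_two] at hk
      rcases mul_eq_zero.mp hk with h | h
      · exact absurd h (Real.exp_ne_zero _)
      · rcases mul_eq_zero.mp h with h' | h'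
        · show p / 2 = 0; linarith
        · exfalso; nlinarith
    | (m+3) => rfl

lemma relEnt_qB_le {p : ℝ} (hp0 : 0 ≤ p) (hp1 : p ≤ 1) :
    relEnt (qB p) (cpF p) ≤ p ^ 2 := by
  rw [relEnt_eq_sum _ _ 3 (Good_qB hp0 hp1).supp,
    Finset.sum_range_succ, Finset.sum_range_succ, Finset.sum_range_one]
  show (1 - p) * Real.log ((1 - p) / cpF p 0) + qB p 1 * Real.log (qB p 1 / cpF p 1)
      + qB p 2 * Real.log (qB p 2 / cpF p 2) ≤ p ^ 2
  rw [cpF_zero, cpF_one, cpF_two]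
  show (1 - p) * Real.log ((1 - p) / Real.exp (-p))
      + p / 2 * Real.log ((p / 2) / (Real.exp (-p) * (p / 2)))
      + p / 2 * Real.log ((p / 2) / (Real.exp (-p) * ((p / 2) * (1 + p / 4)))) ≤ p ^ 2
  have hT0 : (1 - p) * Real.log ((1 - p) / Real.exp (-p)) ≤ 0 := by
    rcases eq_or_lt_of_le hp1 with h1 | h1
    · rw [← h1]; norm_num
    · have h1p : 0 < 1 - p := by linarith
      rw [Real.log_div (ne_of_gt h1p) (Real.exp_ne_zero _), Real.log_exp]
      have hlog : Real.log (1 - p) ≤ (1 - p) - 1 := Real.log_le_sub_one_of_pos h1p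
      have : Real.log (1 - p) - (-p) ≤ 0 := by linarith
      calc (1 - p) * (Real.log (1 - p) - (-p)) ≤ (1 - p) * 0 :=
            mul_le_mul_of_nonneg_left this (le_of_lt h1p)
        _ = 0 := mul_zero _
  have hT1 : p / 2 * Real.log ((p / 2) / (Real.exp (-p) * (p / 2))) ≤ p ^ 2 / 2 := by
    rcases eq_or_lt_of_le hp0 with h0 | h0
    · rw [← h0]; norm_num
    · have harg : (p / 2) / (Real.exp (-p) * (p / 2)) = Real.exp p := by
        rw [div_eq_iff (by positivity)]
        have hexp : Real.exp p * Real.exp (-p) = 1 := by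
          rw [← Real.exp_add]; simp
        rw [← mul_assoc, hexp, one_mul]
      rw [harg, Real.log_exp]
      nlinarith
  have hT2 : p / 2 * Real.log ((p / 2) / (Real.exp (-p) * ((p / 2) * (1 + p / 4)))) ≤ p ^ 2 / 2 := by
    rcases eq_or_lt_of_le hp0 with h0 | h0
    · rw [← h0]; norm_num
    · have harg : (p / 2) / (Real.exp (-p) * ((p / 2) * (1 + p / 4)))
          = Real.exp p / (1 + p / 4) := by
        rw [div_eq_div_iff (by positivity) (by positivity)]
        have hexp : Real.exp p * Real.exp (-p) = 1 := by
          rw [← Real.exp_add]; simp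
        calc p / 2 * (1 + p / 4) = Real.exp p * Real.exp (-p) * (p / 2 * (1 + p / 4)) := by
              rw [hexp, one_mul]
          _ = Real.exp p * (Real.exp (-p) * (p / 2 * (1 + p / 4))) := by ring
      rw [harg, Real.log_div (Real.exp_ne_zero _) (by positivity), Real.log_exp]
      have hlog : 0 ≤ Real.log (1 + p / 4) := Real.log_nonneg (by linarith)
      nlinarith
  linarith

/-- The compound Poisson approximation example: if `X₁,…,X_n` are independent Bernoulli(pᵢ)
variables, `α₁,…,α_n` are i.i.d. uniform on `{1,2}` and independent of the `Xᵢ`, and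
`S_n = ∑ᵢ αᵢ Xᵢ`, then `D(P_{S_n} ‖ CP(λ/2, λ/2)) ≤ ∑ᵢ pᵢ²` where `λ = ∑ᵢ pᵢ`. -/
theorem compound_poisson_approx {Ω : Type*} [MeasurableSpace Ω]
    (μ : Measure Ω) [IsProbabilityMeasure μ]
    (n : ℕ) (X A : Fin n → Ω → ℕ)
    (hXmeas : ∀ i, Measurable (X i)) (hAmeas : ∀ i, Measurable (A i))
    (hbin : ∀ i ω, X i ω ≤ 1)
    (hindep : iIndepFun (Sum.elim X A) μ)
    (hA : ∀ i k, distOf μ (A i) k = if k = 1 then (1 : ℝ) / 2 else if k = 2 then 1 / 2 else 0)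
    (p : Fin n → ℝ) (hp : ∀ i, ∫ ω, (X i ω : ℝ) ∂μ = p i)
    (lam : ℝ) (hlam : ∑ i, p i = lam) :
    relEnt (distOf μ (fun ω => ∑ i, A i ω * X i ω)) (cpPMF lam) ≤ ∑ i, (p i) ^ 2 := by
  classical
  have hq := q_eq hXmeas hAmeas hbin hindep hA p hp
  have hpnn : ∀ i, 0 ≤ p i := fun i => (hq i).2.1
  have hqeq : ∀ i, distOf μ (fun ω => A i ω * X i ω) = qB (p i) := fun i => (hq i).1
  have main : ∀ s : Finset (Fin n),
      (∃ N, Good (distOf μ (fun ω => ∑ i ∈ s, A i ω * X i ω)) N (cpF (∑ i ∈ s, p i)))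
      ∧ relEnt (distOf μ (fun ω => ∑ i ∈ s, A i ω * X i ω)) (cpF (∑ i ∈ s, p i))
          ≤ ∑ i ∈ s, p i ^ 2 := by
    intro s
    induction s using Finset.induction_on with
    | empty =>
      have hfun : (fun ω => ∑ i ∈ (∅ : Finset (Fin n)), A i ω * X i ω) = (fun _ => (0:ℕ)) := by
        funext ω; simp
      have hzero : distOf μ (fun _ : Ω => (0:ℕ)) = qB 0 := by
        funext k
        match k with
        | 0 =>
          show (μ {ω : Ω | (0:ℕ) = 0}).toReal = 1 - 0
          have : {ω : Ω | (0:ℕ) = 0} = Set.univ := by simp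
          rw [this, measure_univ]
          norm_num
        | (m+1) =>
          show (μ {ω : Ω | (0:ℕ) = m + 1}).toReal = qB 0 (m+1)
          have : {ω : Ω | (0:ℕ) = m + 1} = ∅ := by
            ext ω; simp
          rw [this, measure_empty]
          match m with
          | 0 => norm_num [qB]
          | 1 => norm_num [qB]
          | (r+2) => rfl
      rw [hfun, hzero, Finset.sum_empty, Finset.sum_empty]
      refine ⟨⟨3, Good_qB le_rfl zero_le_one⟩, ?_⟩
      have := relEnt_qB_le (le_refl (0:ℝ)) zero_le_one
      simpa using this
    | @insert a s ha ih =>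
      obtain ⟨⟨N, hGood⟩, hD⟩ := ih
      have hfun : (fun ω => ∑ i ∈ insert a s, A i ω * X i ω)
          = (fun ω => (A a ω * X a ω) + ∑ i ∈ s, A i ω * X i ω) := by
        funext ω; rw [Finset.sum_insert ha]
      have hWmeas : Measurable (fun ω => A a ω * X a ω) := (hAmeas a).mul (hXmeas a)
      have hSmeas : Measurable (fun ω => ∑ i ∈ s, A i ω * X i ω) :=
        Finset.measurable_sum s fun i _ => (hAmeas i).mul (hXmeas i)
      have hind := W_indep_sum hXmeas hAmeas hindep a s ha
      have hdist : distOf μ (fun ω => ∑ i ∈ insert a s, A i ω * X i ω)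
          = conv (qB (p a)) (distOf μ (fun ω => ∑ i ∈ s, A i ω * X i ω)) := by
        rw [hfun, distOf_add_indep μ _ _ hWmeas hSmeas hind, hqeq a]
      have hsum : ∑ i ∈ insert a s, p i = p a + ∑ i ∈ s, p i := Finset.sum_insert ha
      have hcp : cpF (∑ i ∈ insert a s, p i)
          = conv (cpF (p a)) (cpF (∑ i ∈ s, p i)) := by
        rw [hsum, cpF_conv]
      have hGa : Good (qB (p a)) 3 (cpF (p a)) := Good_qB (hpnn a) (hq a).2.2
      have hsnn : (0:ℝ) ≤ ∑ i ∈ s, p i := Finset.sum_nonneg fun i _ => hpnn i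
      refine ⟨⟨3 + N, ?_⟩, ?_⟩
      · rw [hdist, hcp]
        exact hGa.conv_good hGood (cpF_nonneg (hpnn a)) (cpF_nonneg hsnn)
      · rw [hdist, hcp, Finset.sum_insert ha]
        calc relEnt (conv (qB (p a)) (distOf μ (fun ω => ∑ i ∈ s, A i ω * X i ω)))
              (conv (cpF (p a)) (cpF (∑ i ∈ s, p i)))
            ≤ relEnt (qB (p a)) (cpF (p a))
              + relEnt (distOf μ (fun ω => ∑ i ∈ s, A i ω * X i ω)) (cpF (∑ i ∈ s, p i)) :=
              relEnt_conv_le hGa hGood (cpF_nonneg (hpnn a)) (cpF_nonneg hsnn)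
          _ ≤ p a ^ 2 + ∑ i ∈ s, p i ^ 2 :=
              add_le_add (relEnt_qB_le (hpnn a) (hq a).2.2) hD
      
  have := (main Finset.univ).2
  rw [cpPMF_eq_cpF, ← hlam]
  exact this
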